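/- Fix u⁻ < u⁺ and τ ∈ [u⁻, u⁺], and let η be C² on [u⁻,u⁺]. Define w(τ) := ∫_{u⁻}^{u⁺} η'(t)·(1_{t>τ}(τ − u⁻) − 1_{t<τ}(u⁺ − τ)) dt. Then |w(τ)| ≤ (sup_{[u⁻,u⁺]} |η''|) · (1/2)·(u⁺ − u⁻)(τ − u⁻)(u⁺ − τ). -/

import Mathlib

open MeasureTheory intervalIntegral

/-- Bound on the weight `w(τ)` appearing in the entropy cost computation. -/
theorem stmt4 (η : ℝ → ℝ) (hη : ContDiff ℝ 2 η)
    (um up τ : ℝ) (h : um < up) (hτ : τ ∈ Set.Icc um up) :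
    |∫ t in um..up, deriv η t *
        ((if τ < t then τ - um else 0) - (if t < τ then up - τ else 0))|
      ≤ (⨆ t : Set.Icc um up, |deriv (deriv η) (t : ℝ)|) *
          ((1 / 2) * (up - um) * (τ - um) * (up - τ)) := by
  obtain ⟨h1, h2⟩ := hτ
  set f := deriv η with hfdef
  set M := (⨆ t : Set.Icc um up, |deriv (deriv η) (t : ℝ)|) with hMdef
  have hη2 : ContDiff ℝ (1 + 1) η := by exact_mod_cast hη
  have hf1 : ContDiff ℝ 1 f := (contDiff_succ_iff_deriv.mp hη2).2.2
  have hfc : Continuous f := hf1.continuous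
  have hfd : Differentiable ℝ f := hf1.differentiable one_ne_zero
  have hf'c : Continuous (deriv f) := hf1.continuous_deriv le_rfl
  -- bound M
  have hbdd : BddAbove (Set.range fun t : Set.Icc um up => |deriv f (t : ℝ)|) := by
    have := (isCompact_Icc.image_of_continuousOn
      ((hf'c.abs).continuousOn : ContinuousOn (fun x => |deriv f x|) (Set.Icc um up))).bddAbove
    rwa [Set.image_eq_range] at this
  have hMb : ∀ x ∈ Set.Icc um up, |deriv f x| ≤ M := fun x hx =>
    le_ciSup hbdd (⟨x, hx⟩ : Set.Icc um up)
  have hlip : ∀ x ∈ Set.Icc um up, |f x - f τ| ≤ M * |x - τ| := by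
    intro x hx
    have := Convex.norm_image_sub_le_of_norm_deriv_le (f := f) (s := Set.Icc um up)
      (fun y _ => hfd y) (fun y hy => by simpa [Real.norm_eq_abs] using hMb y hy)
      (convex_Icc um up) ⟨h1, h2⟩ hx
    simpa [Real.norm_eq_abs] using this
  have hne : ∀ᵐ t : ℝ ∂(volume : Measure ℝ), t ≠ τ :=
    compl_mem_ae_iff.mpr (measure_singleton τ)
  -- integrability
  have hint1 : IntervalIntegrable (fun t => f t *
      ((if τ < t then τ - um else 0) - (if t < τ then up - τ else 0))) volume um τ := by
    apply ((hfc.intervalIntegrable um τ).mul_const (-(up - τ))).congr_ae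
    filter_upwards [ae_restrict_mem measurableSet_uIoc, ae_restrict_of_ae hne] with t ht htne
    rw [Set.uIoc_of_le h1] at ht
    have htlt : t < τ := lt_of_le_of_ne ht.2 htne
    simp [htlt, not_lt.mpr htlt.le]
  have hint2 : IntervalIntegrable (fun t => f t *
      ((if τ < t then τ - um else 0) - (if t < τ then up - τ else 0))) volume τ up := by
    apply ((hfc.intervalIntegrable τ up).mul_const (τ - um)).congr_ae
    filter_upwards [ae_restrict_mem measurableSet_uIoc] with t ht
    rw [Set.uIoc_of_le h2] at ht
    simp [ht.1, not_lt.mpr ht.1.le]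
  have hsplit := integral_add_adjacent_intervals hint1 hint2
  -- values of the two pieces
  have e1 : (∫ t in um..τ, f t *
      ((if τ < t then τ - um else 0) - (if t < τ then up - τ else 0)))
      = (∫ t in um..τ, f t) * (-(up - τ)) := by
    rw [← intervalIntegral.integral_mul_const]
    apply intervalIntegral.integral_congr_ae
    filter_upwards [hne] with t htne ht
    rw [Set.uIoc_of_le h1] at ht
    have htlt : t < τ := lt_of_le_of_ne ht.2 htne
    simp [htlt, not_lt.mpr htlt.le]
  have e2 : (∫ t in τ..up, f t *
      ((if τ < t then τ - um else 0) - (if t < τ then up - τ else 0)))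
      = (∫ t in τ..up, f t) * (τ - um) := by
    rw [← intervalIntegral.integral_mul_const]
    apply intervalIntegral.integral_congr_ae
    filter_upwards with t ht
    rw [Set.uIoc_of_le h2] at ht
    simp [ht.1, not_lt.mpr ht.1.le]
  set A := ∫ t in τ..up, (f t - f τ) with hAdef
  set B := ∫ t in um..τ, (f t - f τ) with hBdef
  have hA : (∫ t in τ..up, f t) = A + (up - τ) * f τ := by
    rw [hAdef, integral_sub (hfc.intervalIntegrable τ up) intervalIntegrable_const,
      intervalIntegral.integral_const, smul_eq_mul]
    ring
  have hB : (∫ t in um..τ, f t) = B + (τ - um) * f τ := by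
    rw [hBdef, integral_sub (hfc.intervalIntegrable um τ) intervalIntegrable_const,
      intervalIntegral.integral_const, smul_eq_mul]
    ring
  have key : (∫ t in um..up, f t *
      ((if τ < t then τ - um else 0) - (if t < τ then up - τ else 0)))
      = (τ - um) * A - (up - τ) * B := by
    rw [← hsplit, e1, e2, hA, hB]; ring
  -- bounds on A and B
  have hAb : |A| ≤ M * ((up - τ) ^ 2 / 2) := by
    have c1 : |A| ≤ ∫ t in τ..up, |f t - f τ| := abs_integral_le_integral_abs h2
    have c2 : (∫ t in τ..up, |f t - f τ|) ≤ ∫ t in τ..up, M * (t - τ) := by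
      apply integral_mono_on h2 ((hfc.sub continuous_const).abs.intervalIntegrable τ up)
        (Continuous.intervalIntegrable (by fun_prop) τ up)
      intro x hx
      have hx' : x ∈ Set.Icc um up := ⟨h1.trans hx.1, hx.2⟩
      have := hlip x hx'
      rwa [abs_of_nonneg (sub_nonneg.2 hx.1)] at this
    have c3 : (∫ t in τ..up, M * (t - τ)) = M * ((up - τ) ^ 2 / 2) := by
      rw [intervalIntegral.integral_const_mul, integral_sub intervalIntegrable_id intervalIntegrable_const,
        integral_id, intervalIntegral.integral_const, smul_eq_mul]
      ring
    calc |A| ≤ _ := c1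
      _ ≤ _ := c2
      _ = _ := c3
  have hBb : |B| ≤ M * ((τ - um) ^ 2 / 2) := by
    have c1 : |B| ≤ ∫ t in um..τ, |f t - f τ| := abs_integral_le_integral_abs h1
    have c2 : (∫ t in um..τ, |f t - f τ|) ≤ ∫ t in um..τ, M * (τ - t) := by
      apply integral_mono_on h1 ((hfc.sub continuous_const).abs.intervalIntegrable um τ)
        (Continuous.intervalIntegrable (by fun_prop) um τ)
      intro x hx
      have hx' : x ∈ Set.Icc um up := ⟨hx.1, hx.2.trans h2⟩
      have := hlip x hx'
      rwa [abs_sub_comm x τ, abs_of_nonneg (sub_nonneg.2 hx.2)] at this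
    have c3 : (∫ t in um..τ, M * (τ - t)) = M * ((τ - um) ^ 2 / 2) := by
      rw [intervalIntegral.integral_const_mul, integral_sub intervalIntegrable_const intervalIntegrable_id,
        integral_id, intervalIntegral.integral_const, smul_eq_mul]
      ring
    calc |B| ≤ _ := c1
      _ ≤ _ := c2
      _ = _ := c3
  rw [key]
  calc |(τ - um) * A - (up - τ) * B|
      ≤ |(τ - um) * A| + |(up - τ) * B| := abs_sub _ _
    _ = (τ - um) * |A| + (up - τ) * |B| := by
        rw [abs_mul, abs_mul, abs_of_nonneg (sub_nonneg.2 h1), abs_of_nonneg (sub_nonneg.2 h2)]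
    _ ≤ (τ - um) * (M * ((up - τ) ^ 2 / 2)) + (up - τ) * (M * ((τ - um) ^ 2 / 2)) :=
        add_le_add (mul_le_mul_of_nonneg_left hAb (sub_nonneg.2 h1))
          (mul_le_mul_of_nonneg_left hBb (sub_nonneg.2 h2))
    _ = M * (1 / 2 * (up - um) * (τ - um) * (up - τ)) := by ring
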